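/- Fix an integer d ≥ 3 and B ∈ ℝ. For θ > 1 let t_*(θ) denote the unique fixed point of F_{θ,B}. Then the map θ ↦ F_{θ,B}'(t_*(θ)) is strictly decreasing on (1,∞); equivalently, since F_{θ,B}'(t_*(θ)) < 0, the derivative (F_{θ,B} ∘ F_{θ,B})'(t_*(θ)) = F_{θ,B}'(t_*(θ))^2 is strictly increasing in θ. -/
import Mathlib

open Set

noncomputable def isingF (d : ℕ) (θ B t : ℝ) : ℝ :=
  2 * B + ((d:ℝ) - 1) * Real.log ((Real.exp t + θ) / (θ * Real.exp t + 1))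

noncomputable def phi (θ x : ℝ) : ℝ := (θ^2 - 1) * x / ((x + θ) * (θ * x + 1))

lemma den_pos {θ x : ℝ} (hθ : 1 < θ) (hx : 0 < x) : 0 < (x + θ) * (θ * x + 1) := by
  positivity

lemma phi_pos {θ x : ℝ} (hθ : 1 < θ) (hx : 0 < x) : 0 < phi θ x := by
  unfold phi
  have h1 : 0 < θ^2 - 1 := by nlinarith
  positivity

lemma phi_lt_phi_theta {θ₁ θ₂ x : ℝ} (h1 : 1 < θ₁) (h12 : θ₁ < θ₂) (hx : 0 < x) :
    phi θ₁ x < phi θ₂ x := by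
  unfold phi
  rw [div_lt_div_iff₀ (den_pos h1 hx) (den_pos (h1.trans h12) hx)]
  have h2 : 1 < θ₂ := h1.trans h12
  nlinarith [mul_pos hx (mul_pos (sub_pos.2 h12) (show (0:ℝ) < θ₁*θ₂+1 by nlinarith)),
    mul_pos (mul_pos (mul_pos hx hx) hx) (mul_pos (sub_pos.2 h12) (show (0:ℝ) < θ₁*θ₂+1 by nlinarith)),
    mul_pos (mul_pos hx hx) (mul_pos (sub_pos.2 h12) (show (0:ℝ) < θ₁+θ₂ by nlinarith))]

lemma phi_le_phi {θ a b : ℝ} (hθ : 1 < θ) (ha : 0 < a) (hb : 0 < b)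
    (h : 0 ≤ (a - b) * (a * b - 1)) : phi θ a ≤ phi θ b := by
  unfold phi
  rw [div_le_div_iff₀ (den_pos hθ ha) (den_pos hθ hb)]
  have hA : (0:ℝ) < θ^2 - 1 := by nlinarith
  nlinarith [mul_nonneg (mul_nonneg hA.le (show (0:ℝ) ≤ θ by linarith)) h]

lemma hasDerivAt_isingF (d : ℕ) (B : ℝ) {θ : ℝ} (hθ : 1 < θ) (t : ℝ) :
    HasDerivAt (isingF d θ B) (-(((d:ℝ) - 1) * phi θ (Real.exp t))) t := by
  have hθ0 : 0 < θ := by linarith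
  have hx : 0 < Real.exp t := Real.exp_pos t
  have hu : (0:ℝ) < Real.exp t + θ := by linarith
  have hv : (0:ℝ) < θ * Real.exp t + 1 := by positivity
  have h1 : HasDerivAt (fun t => Real.exp t + θ) (Real.exp t) t :=
    (Real.hasDerivAt_exp t).add_const θ
  have h2 : HasDerivAt (fun t => θ * Real.exp t + 1) (θ * Real.exp t) t :=
    ((Real.hasDerivAt_exp t).const_mul θ).add_const 1
  have hl1 : HasDerivAt (fun t => Real.log (Real.exp t + θ))
      (Real.exp t / (Real.exp t + θ)) t := h1.log hu.ne'
  have hl2 : HasDerivAt (fun t => Real.log (θ * Real.exp t + 1))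
      (θ * Real.exp t / (θ * Real.exp t + 1)) t := h2.log hv.ne'
  have key : HasDerivAt (isingF d θ B)
      (((d:ℝ) - 1) * (Real.exp t / (Real.exp t + θ) - θ * Real.exp t / (θ * Real.exp t + 1))) t := by
    have heq : isingF d θ B = fun t =>
        2 * B + ((d:ℝ) - 1) * (Real.log (Real.exp t + θ) - Real.log (θ * Real.exp t + 1)) := by
      funext s
      have hus : (0:ℝ) < Real.exp s + θ := by positivity
      have hvs : (0:ℝ) < θ * Real.exp s + 1 := by positivity
      simp [isingF, Real.log_div hus.ne' hvs.ne']
    rw [heq]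
    exact (((hl1.sub hl2).const_mul ((d:ℝ) - 1)).const_add (2 * B))
  convert key using 1
  unfold phi
  field_simp
  ring

lemma isingF_anti (d : ℕ) (hd : 3 ≤ d) (B : ℝ) {θ : ℝ} (hθ : 1 < θ) :
    StrictAnti (isingF d θ B) := by
  intro s t hst
  have hd' : (2:ℝ) ≤ (d:ℝ) - 1 := by
    have : (3:ℝ) ≤ (d:ℝ) := by exact_mod_cast hd
    linarith
  have hθ0 : 0 < θ := by linarith
  have ha : 0 < Real.exp s := Real.exp_pos s
  have hb : 0 < Real.exp t := Real.exp_pos t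
  have hab : Real.exp s < Real.exp t := Real.exp_lt_exp.2 hst
  have hus : (0:ℝ) < Real.exp s + θ := by linarith
  have hvs : (0:ℝ) < θ * Real.exp s + 1 := by positivity
  have hut : (0:ℝ) < Real.exp t + θ := by linarith
  have hvt : (0:ℝ) < θ * Real.exp t + 1 := by positivity
  have hlog : Real.log ((Real.exp t + θ) / (θ * Real.exp t + 1)) <
      Real.log ((Real.exp s + θ) / (θ * Real.exp s + 1)) := by
    apply Real.log_lt_log (by positivity)
    rw [div_lt_div_iff₀ hvt hvs]
    nlinarith [mul_pos (show (0:ℝ) < θ^2 - 1 by nlinarith) (sub_pos.2 hab)]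
  unfold isingF
  nlinarith

lemma isingF_theta_lt (d : ℕ) (hd : 3 ≤ d) (B : ℝ) {θ₁ θ₂ t : ℝ} (h1 : 1 < θ₁)
    (h12 : θ₁ < θ₂) (ht : 0 < t) : isingF d θ₂ B t < isingF d θ₁ B t := by
  have hd' : (2:ℝ) ≤ (d:ℝ) - 1 := by
    have : (3:ℝ) ≤ (d:ℝ) := by exact_mod_cast hd
    linarith
  have h2 : 1 < θ₂ := h1.trans h12
  have hx : 1 < Real.exp t := Real.one_lt_exp_iff.mpr ht
  set x := Real.exp t with hxdef
  have hx0 : 0 < x := by linarith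
  have hu1 : (0:ℝ) < x + θ₁ := by linarith
  have hv1 : (0:ℝ) < θ₁ * x + 1 := by positivity
  have hu2 : (0:ℝ) < x + θ₂ := by linarith
  have hv2 : (0:ℝ) < θ₂ * x + 1 := by positivity
  have hlog : Real.log ((x + θ₂) / (θ₂ * x + 1)) < Real.log ((x + θ₁) / (θ₁ * x + 1)) := by
    apply Real.log_lt_log (by positivity)
    rw [div_lt_div_iff₀ hv2 hv1]
    nlinarith [mul_pos (sub_pos.2 h12) (show (0:ℝ) < x^2 - 1 by nlinarith)]
  unfold isingF
  nlinarith

lemma isingF_theta_gt (d : ℕ) (hd : 3 ≤ d) (B : ℝ) {θ₁ θ₂ t : ℝ} (h1 : 1 < θ₁)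
    (h12 : θ₁ < θ₂) (ht : t < 0) : isingF d θ₁ B t < isingF d θ₂ B t := by
  have hd' : (2:ℝ) ≤ (d:ℝ) - 1 := by
    have : (3:ℝ) ≤ (d:ℝ) := by exact_mod_cast hd
    linarith
  have h2 : 1 < θ₂ := h1.trans h12
  have hx : Real.exp t < 1 := Real.exp_lt_one_iff.mpr ht
  set x := Real.exp t with hxdef
  have hx0 : 0 < x := Real.exp_pos t
  have hu1 : (0:ℝ) < x + θ₁ := by linarith
  have hv1 : (0:ℝ) < θ₁ * x + 1 := by positivity
  have hu2 : (0:ℝ) < x + θ₂ := by linarith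
  have hv2 : (0:ℝ) < θ₂ * x + 1 := by positivity
  have hlog : Real.log ((x + θ₁) / (θ₁ * x + 1)) < Real.log ((x + θ₂) / (θ₂ * x + 1)) := by
    apply Real.log_lt_log (by positivity)
    rw [div_lt_div_iff₀ hv1 hv2]
    nlinarith [mul_pos (sub_pos.2 h12) (show (0:ℝ) < 1 - x^2 by nlinarith)]
  unfold isingF
  nlinarith

theorem stmt14 (d : ℕ) (hd : 3 ≤ d) (B : ℝ) (ts : ℝ → ℝ) (f' : ℝ → ℝ)
    (hts : ∀ θ : ℝ, 1 < θ → isingF d θ B (ts θ) = ts θ)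
    (htsu : ∀ θ : ℝ, 1 < θ → ∀ s : ℝ, isingF d θ B s = s → s = ts θ)
    (hf' : ∀ θ : ℝ, 1 < θ → HasDerivAt (isingF d θ B) (f' θ) (ts θ)) :
    StrictAntiOn f' (Ioi 1) ∧
    (∀ θ : ℝ, 1 < θ → f' θ < 0) ∧
    StrictMonoOn (fun θ => (f' θ) ^ 2) (Ioi 1) := by
  have hd' : (2:ℝ) ≤ (d:ℝ) - 1 := by
    have : (3:ℝ) ≤ (d:ℝ) := by exact_mod_cast hd
    linarith
  -- f' in closed form
  have hf'eq : ∀ θ : ℝ, 1 < θ → f' θ = -(((d:ℝ) - 1) * phi θ (Real.exp (ts θ))) := by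
    intro θ hθ
    exact (hf' θ hθ).unique (hasDerivAt_isingF d B hθ (ts θ))
  -- value at 0
  have hF0 : ∀ θ : ℝ, 1 < θ → isingF d θ B 0 = 2 * B := by
    intro θ hθ
    unfold isingF
    rw [Real.exp_zero]
    have : (1 + θ) / (θ * 1 + 1) = 1 := by
      rw [div_eq_one_iff_eq (by nlinarith)]; ring
    rw [this, Real.log_one]; ring
  -- sign of the fixed point
  have hsign : ∀ θ : ℝ, 1 < θ →
      (0 < B → 0 < ts θ) ∧ (B = 0 → ts θ = 0) ∧ (B < 0 → ts θ < 0) := by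
    intro θ hθ
    have hanti := (isingF_anti d hd B hθ).antitone
    refine ⟨?_, ?_, ?_⟩
    · intro hB
      by_contra hle
      push_neg at hle
      have := hanti hle
      rw [hF0 θ hθ, hts θ hθ] at this
      linarith
    · intro hB
      have h0 : isingF d θ B 0 = 0 := by rw [hF0 θ hθ, hB]; ring
      exact (htsu θ hθ 0 h0).symm
    · intro hB
      by_contra hle
      push_neg at hle
      have := hanti hle
      rw [hF0 θ hθ, hts θ hθ] at this
      linarith
  -- key comparison of phi at the fixed points
  have key : ∀ θ₁ θ₂ : ℝ, 1 < θ₁ → θ₁ < θ₂ →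
      phi θ₁ (Real.exp (ts θ₁)) < phi θ₂ (Real.exp (ts θ₂)) := by
    intro θ₁ θ₂ h1 h12
    have h2 : 1 < θ₂ := h1.trans h12
    have hanti2 := (isingF_anti d hd B h2).antitone
    rcases lt_trichotomy B 0 with hB | hB | hB
    · -- B < 0 : ts θ₁ < ts θ₂ < 0
      have ht1 : ts θ₁ < 0 := (hsign θ₁ h1).2.2 hB
      have ht2 : ts θ₂ < 0 := (hsign θ₂ h2).2.2 hB
      have hlt : ts θ₁ < ts θ₂ := by
        by_contra hle
        push_neg at hle
        have hstep : ts θ₁ < isingF d θ₂ B (ts θ₁) := by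
          have := isingF_theta_gt d hd B h1 h12 ht1
          rw [hts θ₁ h1] at this; exact this
        have := hanti2 hle
        rw [hts θ₂ h2] at this
        linarith
      have ha : 0 < Real.exp (ts θ₁) := Real.exp_pos _
      have hb : 0 < Real.exp (ts θ₂) := Real.exp_pos _
      have hab : Real.exp (ts θ₁) < Real.exp (ts θ₂) := Real.exp_lt_exp.2 hlt
      have hb1 : Real.exp (ts θ₂) < 1 := Real.exp_lt_one_iff.mpr ht2
      calc phi θ₁ (Real.exp (ts θ₁)) < phi θ₂ (Real.exp (ts θ₁)) :=
            phi_lt_phi_theta h1 h12 ha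
        _ ≤ phi θ₂ (Real.exp (ts θ₂)) := by
            apply phi_le_phi h2 ha hb
            nlinarith [mul_pos (sub_pos.2 hab)
              (show (0:ℝ) < 1 - Real.exp (ts θ₁) * Real.exp (ts θ₂) by nlinarith)]
    · -- B = 0 : both fixed points are 0
      have ht1 : ts θ₁ = 0 := (hsign θ₁ h1).2.1 hB
      have ht2 : ts θ₂ = 0 := (hsign θ₂ h2).2.1 hB
      rw [ht1, ht2]
      exact phi_lt_phi_theta h1 h12 (Real.exp_pos 0)
    · -- B > 0 : 0 < ts θ₂ < ts θ₁
      have ht1 : 0 < ts θ₁ := (hsign θ₁ h1).1 hB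
      have ht2 : 0 < ts θ₂ := (hsign θ₂ h2).1 hB
      have hlt : ts θ₂ < ts θ₁ := by
        by_contra hle
        push_neg at hle
        have hstep : isingF d θ₂ B (ts θ₁) < ts θ₁ := by
          have := isingF_theta_lt d hd B h1 h12 ht1
          rw [hts θ₁ h1] at this; exact this
        have := hanti2 hle
        rw [hts θ₂ h2] at this
        linarith
      have ha : 0 < Real.exp (ts θ₁) := Real.exp_pos _
      have hb : 0 < Real.exp (ts θ₂) := Real.exp_pos _
      have hab : Real.exp (ts θ₂) < Real.exp (ts θ₁) := Real.exp_lt_exp.2 hlt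
      have hb1 : 1 < Real.exp (ts θ₂) := Real.one_lt_exp_iff.mpr ht2
      calc phi θ₁ (Real.exp (ts θ₁)) < phi θ₂ (Real.exp (ts θ₁)) :=
            phi_lt_phi_theta h1 h12 ha
        _ ≤ phi θ₂ (Real.exp (ts θ₂)) := by
            apply phi_le_phi h2 ha hb
            nlinarith [mul_pos (sub_pos.2 hab)
              (show (0:ℝ) < Real.exp (ts θ₁) * Real.exp (ts θ₂) - 1 by nlinarith)]
  have hneg : ∀ θ : ℝ, 1 < θ → f' θ < 0 := by
    intro θ hθ
    rw [hf'eq θ hθ]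
    have := phi_pos hθ (Real.exp_pos (ts θ))
    nlinarith
  have hanti : StrictAntiOn f' (Ioi 1) := by
    intro θ₁ h1 θ₂ h2 h12
    simp only [mem_Ioi] at h1 h2
    rw [hf'eq θ₁ h1, hf'eq θ₂ (h1.trans h12)]
    have := key θ₁ θ₂ h1 h12
    nlinarith
  refine ⟨hanti, hneg, ?_⟩
  intro θ₁ h1 θ₂ h2 h12
  simp only [mem_Ioi] at h1 h2
  have ha := hanti h1 h2 h12
  have hb := hneg θ₁ h1
  simp only
  nlinarith
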